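/- Let K ⊆ ℝ^d be a compact convex set with 0 in its interior, and let ε > 0. Then there exist m ∈ ℕ, β > 0 and vectors w₁, …, w_m ∈ ℝ^d such that, defining p : ℝ^d → ℝ by p(x) = β ‖x‖ · log(∑_{i=1}^m exp(⟨w_i, x⟩ / (β ‖x‖))) for x ≠ 0 and p(0) = 0, and Ω := {x ∈ ℝ^d : ⟨x, u⟩ ≤ p(u) for all u ∈ ℝ^d}, the Hausdorff distance between K and Ω is at most ε. In other words, the class of convex sets whose support function is a sublinear log-sum-exp network is dense, for the Hausdorff distance, in the class of convex bodies containing 0 in their interior. -/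

import Mathlib

open RealInnerProductSpace

set_option maxHeartbeats 1000000 in
/-- Convex sets whose *support function* is a sublinear log-sum-exp network are
dense, for the Hausdorff distance, among convex bodies containing `0` in their interior: for every
compact convex `K ⊆ ℝ^d` with `0 ∈ int K` and every `ε > 0` there are `m`, `β > 0` and
`w₁, …, w_m` such that, with `p x = β ‖x‖ log (∑ i, exp (⟪w i, x⟫ / (β ‖x‖)))`, `p 0 = 0` and
`Ω = {x | ∀ u, ⟪x, u⟫ ≤ p u}`, one has `d_H(K, Ω) ≤ ε`. -/
theorem stmt_6 {d : ℕ} (K : Set (EuclideanSpace ℝ (Fin d)))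
    (hKc : IsCompact K) (hKconv : Convex ℝ K)
    (hK0 : (0 : EuclideanSpace ℝ (Fin d)) ∈ interior K)
    (ε : ℝ) (hε : 0 < ε) :
    ∃ (m : ℕ) (β : ℝ) (w : Fin m → EuclideanSpace ℝ (Fin d))
      (p : EuclideanSpace ℝ (Fin d) → ℝ),
      0 < β ∧
      (∀ x : EuclideanSpace ℝ (Fin d), x ≠ 0 →
        p x = β * (‖x‖ * Real.log (∑ i, Real.exp (⟪w i, x⟫ / (β * ‖x‖))))) ∧
      p 0 = 0 ∧
      Metric.hausdorffDist K
        {x : EuclideanSpace ℝ (Fin d) | ∀ u : EuclideanSpace ℝ (Fin d), ⟪x, u⟫ ≤ p u} ≤ ε := by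
  classical
  have hK0' : (0 : EuclideanSpace ℝ (Fin d)) ∈ K := interior_subset hK0
  -- finite ε-net inside K
  obtain ⟨t, ht⟩ := hKc.elim_finite_subcover
      (fun y : K => Metric.ball (y : EuclideanSpace ℝ (Fin d)) ε)
      (fun y => Metric.isOpen_ball)
      (fun x hx => Set.mem_iUnion.2 ⟨⟨x, hx⟩, Metric.mem_ball_self hε⟩)
  set m := t.card with hmdef
  have hmpos : 0 < m := by
    rcases Set.mem_iUnion₂.1 (ht hK0') with ⟨i, hi, _⟩
    exact Finset.card_pos.2 ⟨i, hi⟩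
  haveI : Nonempty (Fin m) := ⟨⟨0, hmpos⟩⟩
  set w : Fin m → EuclideanSpace ℝ (Fin d) :=
    fun i => ((t.equivFin.symm i : K) : EuclideanSpace ℝ (Fin d)) with hwdef
  have hwK : ∀ i, w i ∈ K := fun i => (t.equivFin.symm i : K).2
  have hcover : ∀ x ∈ K, ∃ i, dist x (w i) < ε := by
    intro x hx
    rcases Set.mem_iUnion₂.1 (ht hx) with ⟨y, hy, hxy⟩
    refine ⟨t.equivFin ⟨y, hy⟩, ?_⟩
    simpa [hwdef, Equiv.symm_apply_apply] using hxy
  have hlogm : 0 ≤ Real.log m := Real.log_natCast_nonneg m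
  set β : ℝ := ε / (Real.log m + 1) with hβdef
  have hβ : 0 < β := div_pos hε (by linarith)
  have hβm : β * Real.log m ≤ ε := by
    have h1 : β * (Real.log m + 1) = ε := div_mul_cancel₀ _ (by linarith)
    nlinarith
  set p : EuclideanSpace ℝ (Fin d) → ℝ := fun x =>
    if x = 0 then 0 else β * (‖x‖ * Real.log (∑ i, Real.exp (⟪w i, x⟫ / (β * ‖x‖)))) with hpdef
  refine ⟨m, β, w, p, hβ, fun x hx => if_neg hx, if_pos rfl, ?_⟩
  set C : Set (EuclideanSpace ℝ (Fin d)) := convexHull ℝ (Set.range w) with hCdef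
  have hwC : ∀ i, w i ∈ C := fun i => subset_convexHull ℝ _ ⟨i, rfl⟩
  have hCK : C ⊆ K := convexHull_min (Set.range_subset_iff.2 hwK) hKconv
  have hCconv : Convex ℝ C := convex_convexHull ℝ _
  have hCcl : IsClosed C := ((Set.finite_range w).isCompact_convexHull (𝕜 := ℝ)).isClosed
  have hCne : C.Nonempty := ⟨w ⟨0, hmpos⟩, hwC _⟩
  have hSpos : ∀ u : EuclideanSpace ℝ (Fin d),
      0 < ∑ i, Real.exp (⟪w i, u⟫ / (β * ‖u‖)) := fun u =>
    Finset.sum_pos (fun j _ => Real.exp_pos _) ⟨⟨0, hmpos⟩, Finset.mem_univ _⟩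
  -- lower bound: support of each w i is below p
  have hlow : ∀ u : EuclideanSpace ℝ (Fin d), u ≠ 0 → ∀ i, ⟪w i, u⟫ ≤ p u := by
    intro u hu i
    have hnorm : (0 : ℝ) < ‖u‖ := norm_pos_iff.2 hu
    have htpos : 0 < β * ‖u‖ := mul_pos hβ hnorm
    have h1 : Real.exp (⟪w i, u⟫ / (β * ‖u‖)) ≤ ∑ j, Real.exp (⟪w j, u⟫ / (β * ‖u‖)) :=
      Finset.single_le_sum (f := fun j => Real.exp (⟪w j, u⟫ / (β * ‖u‖)))
        (fun j _ => (Real.exp_pos _).le) (Finset.mem_univ i)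
    have h2 : ⟪w i, u⟫ / (β * ‖u‖) ≤
        Real.log (∑ j, Real.exp (⟪w j, u⟫ / (β * ‖u‖))) :=
      (Real.le_log_iff_exp_le (hSpos u)).2 h1
    have h3 := (div_le_iff₀ htpos).1 h2
    have hpu : p u = β * (‖u‖ * Real.log (∑ j, Real.exp (⟪w j, u⟫ / (β * ‖u‖)))) := if_neg hu
    rw [hpu, show β * (‖u‖ * Real.log (∑ j, Real.exp (⟪w j, u⟫ / (β * ‖u‖))))
      = Real.log (∑ j, Real.exp (⟪w j, u⟫ / (β * ‖u‖))) * (β * ‖u‖) from by ring]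
    exact h3
  -- C ⊆ Ω
  have hCΩ : C ⊆ {x : EuclideanSpace ℝ (Fin d) |
      ∀ u : EuclideanSpace ℝ (Fin d), ⟪x, u⟫ ≤ p u} := by
    apply convexHull_min
    · rintro _ ⟨i, rfl⟩ u
      by_cases hu : u = 0
      · simp [hu, hpdef]
      · exact hlow u hu i
    · intro a ha b hb s r hs hr hsr u
      have h1 : ⟪a, u⟫ ≤ p u := ha u
      have h2 : ⟪b, u⟫ ≤ p u := hb u
      have : ⟪s • a + r • b, u⟫ = s * ⟪a, u⟫ + r * ⟪b, u⟫ := by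
        rw [inner_add_left, real_inner_smul_left, real_inner_smul_left]
      rw [Set.mem_setOf_eq] at *
      calc ⟪s • a + r • b, u⟫ = s * ⟪a, u⟫ + r * ⟪b, u⟫ := this
        _ ≤ s * p u + r * p u :=
          add_le_add (mul_le_mul_of_nonneg_left h1 hs) (mul_le_mul_of_nonneg_left h2 hr)
        _ = p u := by rw [← add_mul, hsr, one_mul]
  -- second half: every point of Ω is ε-close to K
  have hΩK : ∀ x ∈ {x : EuclideanSpace ℝ (Fin d) |
      ∀ u : EuclideanSpace ℝ (Fin d), ⟪x, u⟫ ≤ p u}, Metric.infDist x K ≤ ε := by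
    intro x hx
    obtain ⟨v, hvC, hvmin⟩ := exists_norm_eq_iInf_of_complete_convex hCne hCcl.isComplete hCconv x
    have hchar := (norm_eq_iInf_iff_real_inner_le_zero hCconv hvC).1 hvmin
    by_cases hxv : x - v = 0
    · have hxK : x ∈ K := hCK (by rwa [sub_eq_zero.1 hxv])
      rw [Metric.infDist_zero_of_mem hxK]; exact hε.le
    · set u : EuclideanSpace ℝ (Fin d) := x - v with hudef
      have hnorm : (0 : ℝ) < ‖u‖ := norm_pos_iff.2 hxv
      have htpos : 0 < β * ‖u‖ := mul_pos hβ hnorm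
      have hwv : ∀ i, ⟪w i, u⟫ ≤ ⟪v, u⟫ := by
        intro i
        have h := hchar (w i) (hwC i)
        have h2 : ⟪u, w i - v⟫ ≤ 0 := h
        have h3 : ⟪w i - v, u⟫ ≤ 0 := by rwa [real_inner_comm]
        have h4 : ⟪w i, u⟫ - ⟪v, u⟫ = ⟪w i - v, u⟫ := (inner_sub_left _ _ _).symm
        linarith
      -- upper bound on p u
      have hup : p u ≤ ⟪v, u⟫ + β * Real.log m * ‖u‖ := by
        have hsum : (∑ i, Real.exp (⟪w i, u⟫ / (β * ‖u‖)))
            ≤ (m : ℝ) * Real.exp (⟪v, u⟫ / (β * ‖u‖)) := by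
          calc (∑ i, Real.exp (⟪w i, u⟫ / (β * ‖u‖)))
              ≤ ∑ _i : Fin m, Real.exp (⟪v, u⟫ / (β * ‖u‖)) :=
                Finset.sum_le_sum (fun i _ => Real.exp_le_exp.2
                  (div_le_div_of_nonneg_right (hwv i) htpos.le))
            _ = (m : ℝ) * Real.exp (⟪v, u⟫ / (β * ‖u‖)) := by
                simp [Finset.sum_const, Finset.card_univ, mul_comm]
        have hlog : Real.log (∑ i, Real.exp (⟪w i, u⟫ / (β * ‖u‖)))
            ≤ Real.log m + ⟪v, u⟫ / (β * ‖u‖) := by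
          calc Real.log (∑ i, Real.exp (⟪w i, u⟫ / (β * ‖u‖)))
              ≤ Real.log ((m : ℝ) * Real.exp (⟪v, u⟫ / (β * ‖u‖))) :=
                Real.log_le_log (hSpos u) hsum
            _ = Real.log m + ⟪v, u⟫ / (β * ‖u‖) := by
                rw [Real.log_mul (Nat.cast_ne_zero.2 hmpos.ne') (Real.exp_ne_zero _), Real.log_exp]
        have hpu : p u = β * (‖u‖ * Real.log (∑ j, Real.exp (⟪w j, u⟫ / (β * ‖u‖)))) :=
          if_neg hxv
        rw [hpu]
        have hkey : β * (‖u‖ * (Real.log m + ⟪v, u⟫ / (β * ‖u‖)))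
            = ⟪v, u⟫ + β * Real.log m * ‖u‖ := by
          have h := mul_div_cancel₀ (⟪v, u⟫) (ne_of_gt htpos)
          linear_combination h
        calc β * (‖u‖ * Real.log (∑ j, Real.exp (⟪w j, u⟫ / (β * ‖u‖))))
            ≤ β * (‖u‖ * (Real.log m + ⟪v, u⟫ / (β * ‖u‖))) :=
              mul_le_mul_of_nonneg_left
                (mul_le_mul_of_nonneg_left hlog (norm_nonneg u)) hβ.le
          _ = ⟪v, u⟫ + β * Real.log m * ‖u‖ := hkey
      have hxu : ⟪x, u⟫ ≤ p u := hx u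
      have hsq : ‖u‖ ^ 2 ≤ β * Real.log m * ‖u‖ := by
        have h5 : ⟪x, u⟫ - ⟪v, u⟫ = ⟪u, u⟫ := by rw [← inner_sub_left, ← hudef]
        have h6 : ⟪u, u⟫ = ‖u‖ ^ 2 := real_inner_self_eq_norm_sq u
        linarith
      have hle : ‖u‖ ≤ β * Real.log m := by nlinarith [hsq, hnorm]
      have : dist x v ≤ ε := by
        rw [dist_eq_norm]
        exact le_trans hle hβm
      exact le_trans (Metric.infDist_le_dist_of_mem (hCK hvC)) this
  refine Metric.hausdorffDist_le_of_infDist hε.le ?_ hΩK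
  intro x hx
  obtain ⟨i, hi⟩ := hcover x hx
  exact le_trans (Metric.infDist_le_dist_of_mem (hCΩ (hwC i))) hi.le
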